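/- arXiv:1402.0254 — 2 statements merged into one kernel-verified Lean document; each statement's English description precedes it below -/
import Mathlib

section
/- The only triples of positive integers (m₁, m₂, n) with m₁ ≤ m₂, m₁ ∣ n, m₂ ∣ n, satisfying 1 + 2/n = (m₁-1)/m₁ + (m₂-1)/m₂, are (4,4,4), (3,3,6), (2,6,6), (2,4,8), and (2,3,12). -/
/-- The only triples of positive integers `(m₁, m₂, n)` with `m₁ ≤ m₂`, `m₁ ∣ n`, `m₂ ∣ n`,
satisfying `1 + 2/n = (m₁-1)/m₁ + (m₂-1)/m₂`, are
`(4,4,4)`, `(3,3,6)`, `(2,6,6)`, `(2,4,8)`, and `(2,3,12)`. -/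
theorem stmt0 (m₁ m₂ n : ℕ) (hm₁ : 0 < m₁) (hm₂ : 0 < m₂) (hn : 0 < n) :
    (m₁ ≤ m₂ ∧ m₁ ∣ n ∧ m₂ ∣ n ∧
      (1 + 2 / (n : ℚ) = ((m₁ : ℚ) - 1) / m₁ + ((m₂ : ℚ) - 1) / m₂)) ↔
      ((m₁, m₂, n) = (4, 4, 4) ∨ (m₁, m₂, n) = (3, 3, 6) ∨ (m₁, m₂, n) = (2, 6, 6) ∨
        (m₁, m₂, n) = (2, 4, 8) ∨ (m₁, m₂, n) = (2, 3, 12)) := by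
  constructor
  · rintro ⟨hle, h1, h2, heq⟩
    have hn0 : (n : ℚ) ≠ 0 := Nat.cast_ne_zero.mpr hn.ne'
    have hm10 : (m₁ : ℚ) ≠ 0 := Nat.cast_ne_zero.mpr hm₁.ne'
    have hm20 : (m₂ : ℚ) ≠ 0 := Nat.cast_ne_zero.mpr hm₂.ne'
    have keyQ : ((2 * m₁ * m₂ + n * m₁ + n * m₂ : ℕ) : ℚ) = ((n * m₁ * m₂ : ℕ) : ℚ) := by
      push_cast
      field_simp at heq
      linear_combination heq
    have key : 2 * m₁ * m₂ + n * m₁ + n * m₂ = n * m₁ * m₂ := Nat.cast_injective keyQ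
    have hnm₂ : m₂ ≤ n := Nat.le_of_dvd hn h2
    have hnm₁ : m₁ ≤ n := Nat.le_of_dvd hn h1
    have t1 : m₁ * m₂ ≤ n * m₂ := Nat.mul_le_mul_right _ hnm₁
    have t2 : n * m₁ ≤ n * m₂ := Nat.mul_le_mul_left _ hle
    have hb1 : m₁ ≤ 4 := by
      by_contra hc
      push_neg at hc
      have t3 : 5 * (n * m₂) ≤ m₁ * (n * m₂) := Nat.mul_le_mul_right _ hc
      nlinarith [t1, t2, t3, key]
    have hb0 : 2 ≤ m₁ := by
      rcases Nat.lt_or_ge m₁ 2 with h | h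
      · interval_cases m₁ <;> nlinarith
      · exact h
    interval_cases m₁
    · -- m₁ = 2
      have hb2 : m₂ ≤ 6 := by nlinarith
      interval_cases m₂ <;> simp [Prod.mk.injEq] <;> omega
    · -- m₁ = 3
      have hb2 : m₂ ≤ 4 := by nlinarith
      interval_cases m₂ <;> simp [Prod.mk.injEq] <;> omega
    · -- m₁ = 4
      have hb2 : m₂ ≤ 4 := by nlinarith
      interval_cases m₂ <;> simp [Prod.mk.injEq] <;> omega
  · rintro (h | h | h | h | h) <;>
      simp only [Prod.mk.injEq] at h <;>
      obtain ⟨rfl, rfl, rfl⟩ := h <;>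
      norm_num
end

section
/- The only tuples of positive integers (m₁,…,m_r, n) with r ≥ 1, each mᵢ ≥ 2, mᵢ ∣ n for all i, m₁ ≤ … ≤ m_r, satisfying 1 + 2/n = ∑ᵢ₌₁^r (mᵢ-1)/mᵢ, are: (4,4;4), (3,3;6), (2,6;6), (2,4;8), (2,3;12), (2,2,2;4), and (2,2,2,2;2). -/
lemma aux_half_le (x : ℚ) (hx : 2 ≤ x) : 1/2 ≤ (x-1)/x := by
  rw [div_le_div_iff₀ (by norm_num) (by linarith)]; linarith

lemma aux_lt_one (x : ℚ) (hx : 2 ≤ x) : (x-1)/x < 1 := by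
  rw [div_lt_one (by linarith)]; linarith

lemma aux_eq (x : ℚ) (hx : 2 ≤ x) : (x-1)/x = 1 - 1/x := by
  have : x ≠ 0 := by linarith
  field_simp

lemma aux_inv_le (x : ℚ) (hx : 2 ≤ x) : 1/x ≤ 1/2 := by
  rw [div_le_div_iff₀ (by linarith) (by norm_num)]; linarith

lemma aux_tail_nonneg (t : List ℕ) (h2 : ∀ i ∈ t, 2 ≤ i) :
    0 ≤ (List.map (fun i : ℚ => (i - 1) / i) (t.flatMap fun a : ℕ => [(a : ℚ)])).sum := by
  apply List.sum_nonneg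
  intro x hx
  simp only [List.mem_map, List.mem_flatMap, List.mem_singleton] at hx
  obtain ⟨i, ⟨j, hj, rfl⟩, rfl⟩ := hx
  have h2j : (2:ℚ) ≤ (j:ℚ) := by exact_mod_cast h2 j hj
  apply div_nonneg <;> linarith


set_option maxHeartbeats 2000000 in

/-- The only tuples of positive integers `(m₁,…,m_r, n)` with `r ≥ 1`, each `mᵢ ≥ 2`,
`mᵢ ∣ n` for all `i`, `m₁ ≤ … ≤ m_r`, satisfying `1 + 2/n = ∑ᵢ (mᵢ-1)/mᵢ`, are:
`(4,4;4)`, `(3,3;6)`, `(2,6;6)`, `(2,4;8)`, `(2,3;12)`, `(2,2,2;4)`, `(2,2,2,2;2)`. -/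
theorem stmt1 (m : List ℕ) (n : ℕ) (hn : 0 < n) (hr : m ≠ [])
    (h2 : ∀ i ∈ m, 2 ≤ i) (hdvd : ∀ i ∈ m, i ∣ n) (hsorted : m.Pairwise (· ≤ ·)) :
    (1 + 2 / (n : ℚ) = (m.map (fun i => ((i : ℚ) - 1) / i)).sum) ↔
      (m, n) ∈ [([4, 4], 4), ([3, 3], 6), ([2, 6], 6), ([2, 4], 8), ([2, 3], 12),
        ([2, 2, 2], 4), ([2, 2, 2, 2], 2)] := by

  have hn0 : (0:ℚ) < (n:ℚ) := by exact_mod_cast hn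
  constructor
  · intro h
    rcases m with _ | ⟨a, _ | ⟨b, _ | ⟨c, _ | ⟨d, _ | ⟨e, t⟩⟩⟩⟩⟩
    · exact absurd rfl hr
    · -- one element
      have ha : 2 ≤ a := h2 a (by simp)
      have haQ : (2:ℚ) ≤ (a:ℚ) := by exact_mod_cast ha
      simp at h
      have := aux_lt_one _ haQ
      have : 0 < 2/(n:ℚ) := by positivity
      linarith
    · -- two elements
      have ha : 2 ≤ a := h2 a (by simp)
      have hb : 2 ≤ b := h2 b (by simp)
      have hab : a ≤ b := (List.pairwise_cons.mp hsorted).1 b (by simp)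
      have had : a ∣ n := hdvd a (by simp)
      have hbd : b ∣ n := hdvd b (by simp)
      have hbn : b ≤ n := Nat.le_of_dvd hn hbd
      have haQ : (2:ℚ) ≤ (a:ℚ) := by exact_mod_cast ha
      have hbQ : (2:ℚ) ≤ (b:ℚ) := by exact_mod_cast hb
      have hbnQ : (b:ℚ) ≤ (n:ℚ) := by exact_mod_cast hbn
      simp at h
      rw [aux_eq _ haQ, aux_eq _ hbQ] at h
      have key : 1/(a:ℚ) + 1/(b:ℚ) + 2/(n:ℚ) = 1 := by linarith
      have h2n : 2/(n:ℚ) ≤ 2/(b:ℚ) := by gcongr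
      have hia := aux_inv_le _ haQ
      have hb6 : (b:ℚ) ≤ 6 := by
        have h3b : 1/2 ≤ 3/(b:ℚ) := by
          have : 1/(b:ℚ) + 2/(b:ℚ) = 3/(b:ℚ) := by ring
          linarith
        rw [div_le_div_iff₀ (by norm_num) (by linarith)] at h3b
        linarith
      have hb6' : b ≤ 6 := by exact_mod_cast hb6
      clear key h2n hia hb6 hbnQ haQ hbQ hsorted h2 hdvd
      have hne : (n:ℚ) ≠ 0 := ne_of_gt hn0
      interval_cases b <;> interval_cases a <;>
        (push_cast at h; field_simp at h; try norm_num at h; try norm_cast at h) <;>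
        first
          | omega
          | (simp only [List.mem_cons, List.mem_singleton, Prod.mk.injEq,
              List.cons.injEq, and_true, and_false, false_and, true_and,
              or_false, false_or]
             omega)
    · -- three elements
      have ha : 2 ≤ a := h2 a (by simp)
      have hb : 2 ≤ b := h2 b (by simp)
      have hc : 2 ≤ c := h2 c (by simp)
      have hab : a ≤ b := (List.pairwise_cons.mp hsorted).1 b (by simp)
      have hbc : b ≤ c := (List.pairwise_cons.mp (List.pairwise_cons.mp hsorted).2).1 c (by simp)
      have had : a ∣ n := hdvd a (by simp)
      have hbd : b ∣ n := hdvd b (by simp)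
      have hcd : c ∣ n := hdvd c (by simp)
      have hcn : c ≤ n := Nat.le_of_dvd hn hcd
      have haQ : (2:ℚ) ≤ (a:ℚ) := by exact_mod_cast ha
      have hbQ : (2:ℚ) ≤ (b:ℚ) := by exact_mod_cast hb
      have hcQ : (2:ℚ) ≤ (c:ℚ) := by exact_mod_cast hc
      have hcnQ : (c:ℚ) ≤ (n:ℚ) := by exact_mod_cast hcn
      simp at h
      rw [aux_eq _ haQ, aux_eq _ hbQ, aux_eq _ hcQ] at h
      have key : 1/(a:ℚ) + 1/(b:ℚ) + 1/(c:ℚ) + 2/(n:ℚ) = 2 := by linarith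
      have h2n : 2/(n:ℚ) ≤ 2/(c:ℚ) := by gcongr
      have hia := aux_inv_le _ haQ
      have hib := aux_inv_le _ hbQ
      have hc3 : (c:ℚ) ≤ 3 := by
        have h3c : 1 ≤ 3/(c:ℚ) := by
          have : 1/(c:ℚ) + 2/(c:ℚ) = 3/(c:ℚ) := by ring
          linarith
        rw [le_div_iff₀ (by linarith)] at h3c
        linarith
      have hc3' : c ≤ 3 := by exact_mod_cast hc3
      clear key h2n hia hib hc3 hcnQ haQ hbQ hcQ hsorted h2 hdvd
      have hne : (n:ℚ) ≠ 0 := ne_of_gt hn0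
      interval_cases c <;> interval_cases b <;> interval_cases a <;>
        (push_cast at h; field_simp at h; try norm_num at h; try norm_cast at h) <;>
        first
          | omega
          | (simp only [List.mem_cons, List.mem_singleton, Prod.mk.injEq,
              List.cons.injEq, and_true, and_false, false_and, true_and,
              or_false, false_or]
             omega)
    · -- four elements
      have ha : 2 ≤ a := h2 a (by simp)
      have hb : 2 ≤ b := h2 b (by simp)
      have hc : 2 ≤ c := h2 c (by simp)
      have hd : 2 ≤ d := h2 d (by simp)
      have haQ : (2:ℚ) ≤ (a:ℚ) := by exact_mod_cast ha
      have hbQ : (2:ℚ) ≤ (b:ℚ) := by exact_mod_cast hb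
      have hcQ : (2:ℚ) ≤ (c:ℚ) := by exact_mod_cast hc
      have hdQ : (2:ℚ) ≤ (d:ℚ) := by exact_mod_cast hd
      simp at h
      have h1 := aux_half_le _ haQ
      have h2' := aux_half_le _ hbQ
      have h3 := aux_half_le _ hcQ
      have h4 := aux_half_le _ hdQ
      have h1n : 1 ≤ 2/(n:ℚ) := by linarith
      rw [le_div_iff₀ hn0] at h1n
      have hn2 : n ≤ 2 := by exact_mod_cast (by linarith : (n:ℚ) ≤ 2)
      have hna : a ≤ n := Nat.le_of_dvd hn (hdvd a (by simp))
      have hnb : b ≤ n := Nat.le_of_dvd hn (hdvd b (by simp))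
      have hnc : c ≤ n := Nat.le_of_dvd hn (hdvd c (by simp))
      have hnd : d ≤ n := Nat.le_of_dvd hn (hdvd d (by simp))
      have ea : a = 2 := by omega
      have eb : b = 2 := by omega
      have ec : c = 2 := by omega
      have ed : d = 2 := by omega
      have en : n = 2 := by omega
      subst ea; subst eb; subst ec; subst ed; subst en
      simp
    · -- five or more elements: contradiction
      have ha : 2 ≤ a := h2 a (by simp)
      have haQ : (2:ℚ) ≤ (a:ℚ) := by exact_mod_cast ha
      have hna : a ≤ n := Nat.le_of_dvd hn (hdvd a (by simp))
      have hnaQ : (2:ℚ) ≤ (n:ℚ) := by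
        have : (a:ℚ) ≤ (n:ℚ) := by exact_mod_cast hna
        linarith
      simp at h
      have hbQ : (2:ℚ) ≤ (b:ℚ) := by exact_mod_cast h2 b (by simp)
      have hcQ : (2:ℚ) ≤ (c:ℚ) := by exact_mod_cast h2 c (by simp)
      have hdQ : (2:ℚ) ≤ (d:ℚ) := by exact_mod_cast h2 d (by simp)
      have heQ : (2:ℚ) ≤ (e:ℚ) := by exact_mod_cast h2 e (by simp)
      have g1 := aux_half_le _ haQ
      have g2 := aux_half_le _ hbQ
      have g3 := aux_half_le _ hcQ
      have g4 := aux_half_le _ hdQ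
      have g5 := aux_half_le _ heQ
      have ht := aux_tail_nonneg t (fun i hi => h2 i (by simp [hi]))
      have h2n : 2/(n:ℚ) ≤ 1 := by
        rw [div_le_one hn0]; linarith
      linarith
  · intro h
    simp only [List.mem_cons, List.mem_singleton, Prod.mk.injEq, List.not_mem_nil,
      or_false] at h
    rcases h with ⟨hm, hn'⟩ | ⟨hm, hn'⟩ | ⟨hm, hn'⟩ | ⟨hm, hn'⟩ | ⟨hm, hn'⟩ | ⟨hm, hn'⟩ | ⟨hm, hn'⟩ <;>
      subst hm <;> subst hn' <;> norm_num
end
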